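/- Let X⋆ ∈ ℝ^{I₁×I₂×I₃} have tubal rank R with skinny t-SVD X⋆ = U⋆*Σ⋆*V⋆ᵀ and factors L⋆ := U⋆*Σ⋆^{1/2}, R⋆ := V⋆*Σ⋆^{1/2}. Let L♮ ∈ ℝ^{I₁×R×I₃} and R♮ ∈ ℝ^{I₂×R×I₃}, and set Δ_L := L♮ − L⋆, Δ_R := R♮ − R⋆. If ‖Δ_L*Σ⋆^{−1/2}‖_op ∨ ‖Δ_R*Σ⋆^{−1/2}‖_op < 1, then L♮ᵀ*L♮ and R♮ᵀ*R♮ are invertible for the t-product, and ‖L♮*(L♮ᵀ*L♮)⁻¹*Σ⋆^{1/2}‖_op ≤ 1/(1 − ‖Δ_L*Σ⋆^{−1/2}‖_op) and ‖R♮*(R♮ᵀ*R♮)⁻¹*Σ⋆^{1/2}‖_op ≤ 1/(1 − ‖Δ_R*Σ⋆^{−1/2}‖_op). -/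

import Mathlib

open scoped BigOperators
open Matrix

/-- An order-3 real tensor. -/
abbrev Tensor (I₁ I₂ I₃ : ℕ) := Fin I₁ → Fin I₂ → Fin I₃ → ℝ

namespace RTPCA

variable {I₁ I₂ I₃ J R : ℕ}

/-- The t-product, computed by circular convolution along the third mode
(equivalently, slice-wise products in the Fourier domain). -/
noncomputable def tprod (A : Tensor I₁ I₂ I₃) (B : Tensor I₂ J I₃) : Tensor I₁ J I₃ :=
  fun i j k => ∑ l : Fin I₂, ∑ t : Fin I₃, A i l t * B l j (k - t)

/-- The tensor transpose: transpose each frontal slice and reverse the order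
of the frontal slices 2 through I₃. -/
def tT (A : Tensor I₁ I₂ I₃) : Tensor I₂ I₁ I₃ :=
  fun j i k => A i j (-k)

/-- The identity tensor: first frontal slice is the identity, the rest are zero. -/
def idT (R I₃ : ℕ) : Tensor R R I₃ :=
  fun i j k => if i = j ∧ (k : ℕ) = 0 then 1 else 0

/-- Discrete Fourier transform along the third mode. -/
noncomputable def dft (A : Tensor I₁ I₂ I₃) (i : Fin I₁) (j : Fin I₂) (k : Fin I₃) : ℂ :=
  ∑ t : Fin I₃, (A i j t : ℂ) *
    Complex.exp (-(2 * Real.pi * Complex.I * (k.val : ℂ) * (t.val : ℂ)) / (I₃ : ℂ))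

/-- Fourier-domain frontal slice. -/
noncomputable def fSlice (A : Tensor I₁ I₂ I₃) (k : Fin I₃) : Matrix (Fin I₁) (Fin I₂) ℂ :=
  Matrix.of fun i j => dft A i j k

/-- Inverse DFT along the third mode (real part). -/
noncomputable def invDft (F : Fin I₁ → Fin I₂ → Fin I₃ → ℂ) : Tensor I₁ I₂ I₃ :=
  fun i j t =>
    ((∑ k : Fin I₃, F i j k *
      Complex.exp ((2 * Real.pi * Complex.I * (k.val : ℂ) * (t.val : ℂ)) / (I₃ : ℂ))) / (I₃ : ℂ)).re

/-- Squared Frobenius norm. -/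
noncomputable def fro2 (A : Tensor I₁ I₂ I₃) : ℝ := ∑ i, ∑ j, ∑ k, (A i j k) ^ 2

/-- Frobenius norm. -/
noncomputable def froNorm (A : Tensor I₁ I₂ I₃) : ℝ := Real.sqrt (fro2 A)

/-- Entrywise sup norm ‖A‖_∞. -/
noncomputable def infNorm (A : Tensor I₁ I₂ I₃) : ℝ := ⨆ i, ⨆ j, ⨆ k, |A i j k|

/-- ℓ_{2,∞} norm: largest ℓ₂ norm of a horizontal slice. -/
noncomputable def twoInfNorm (A : Tensor I₁ I₂ I₃) : ℝ :=
  ⨆ i, Real.sqrt (∑ j, ∑ k, (A i j k) ^ 2)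

/-- ℓ_{1,∞} norm: largest ℓ₁ norm of a horizontal slice. -/
noncomputable def oneInfNorm (A : Tensor I₁ I₂ I₃) : ℝ := ⨆ i, ∑ j, ∑ k, |A i j k|

/-- Spectral norm (largest singular value) of a complex matrix. -/
noncomputable def matSpecNorm {m n : ℕ} (M : Matrix (Fin m) (Fin n) ℂ) : ℝ :=
  ‖LinearMap.toContinuousLinearMap (Matrix.toEuclideanLin M)‖

/-- Tensor spectral norm = tensor operator norm: the largest singular value of
the Fourier-domain frontal slices. -/
noncomputable def specNorm (A : Tensor I₁ I₂ I₃) : ℝ :=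
  ⨆ k : Fin I₃, matSpecNorm (fSlice A k)

/-- f-diagonal in the Fourier domain with strictly positive diagonal entries. -/
def FDiagPos (S : Tensor R R I₃) : Prop :=
  (∀ k, ∀ i j : Fin R, i ≠ j → fSlice S k i j = 0) ∧
  (∀ k, ∀ i : Fin R, 0 < (fSlice S k i i).re ∧ (fSlice S k i i).im = 0)

/-- f-diagonal in the Fourier domain with nonnegative diagonal entries. -/
def FDiagNonneg (S : Tensor R R I₃) : Prop :=
  (∀ k, ∀ i j : Fin R, i ≠ j → fSlice S k i j = 0) ∧
  (∀ k, ∀ i : Fin R, 0 ≤ (fSlice S k i i).re ∧ (fSlice S k i i).im = 0)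

/-- Skinny t-SVD with tubal rank R (strictly positive Fourier-domain diagonal). -/
structure IsSkinnyTSVD (X : Tensor I₁ I₂ I₃) (U : Tensor I₁ R I₃)
    (S : Tensor R R I₃) (V : Tensor I₂ R I₃) : Prop where
  decomp : X = tprod (tprod U S) (tT V)
  orthU : tprod (tT U) U = idT R I₃
  orthV : tprod (tT V) V = idT R I₃
  diag : FDiagPos S

/-- Skinny t-SVD with tubal rank at most R (nonnegative diagonal allowed). -/
structure IsSkinnyTSVDLe (X : Tensor I₁ I₂ I₃) (U : Tensor I₁ R I₃)
    (S : Tensor R R I₃) (V : Tensor I₂ R I₃) : Prop where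
  decomp : X = tprod (tprod U S) (tT V)
  orthU : tprod (tT U) U = idT R I₃
  orthV : tprod (tT V) V = idT R I₃
  diag : FDiagNonneg S

/-- σ_min: the smallest Fourier-domain diagonal entry of Σ. -/
noncomputable def sigmaMin (S : Tensor R R I₃) : ℝ :=
  ⨅ k : Fin I₃, ⨅ i : Fin R, (fSlice S k i i).re

/-- σ_max (= σ₁): the largest Fourier-domain diagonal entry of Σ. -/
noncomputable def sigmaMax (S : Tensor R R I₃) : ℝ :=
  ⨆ k : Fin I₃, ⨆ i : Fin R, (fSlice S k i i).re

/-- Condition number κ = σ_max / σ_min. -/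
noncomputable def condNum (S : Tensor R R I₃) : ℝ := sigmaMax S / sigmaMin S

/-- Σ^{1/2}: entrywise square roots in the Fourier domain. -/
noncomputable def sqrtT (S : Tensor R R I₃) : Tensor R R I₃ :=
  invDft fun i j k => (Real.sqrt ((dft S i j k).re) : ℂ)

/-- Σ^{-1/2}: entrywise reciprocal square roots in the Fourier domain. -/
noncomputable def invSqrtT (S : Tensor R R I₃) : Tensor R R I₃ :=
  invDft fun i j k => (((Real.sqrt ((dft S i j k).re))⁻¹ : ℝ) : ℂ)

/-- `Qi` is a two-sided t-product inverse of `Q` (i.e. `Q ∈ GL(R)`). -/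
def TInv (Q Qi : Tensor R R I₃) : Prop :=
  tprod Q Qi = idT R I₃ ∧ tprod Qi Q = idT R I₃

/-- Alignment error (the quantity inside the infimum defining `distT`)
for a given invertible Q with inverse Qi. -/
noncomputable def alignErr (L Ls : Tensor I₁ R I₃) (Rt Rs : Tensor I₂ R I₃)
    (Sh : Tensor R R I₃) (Q Qi : Tensor R R I₃) : ℝ :=
  Real.sqrt ((froNorm (tprod (tprod L Q - Ls) Sh)) ^ 2 +
    (froNorm (tprod (tprod Rt (tT Qi) - Rs) Sh)) ^ 2)

/-- The distance metric dist(L,R;L⋆,R⋆): the infimum of alignment errors over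
invertible tensors Q, where `Sh` is Σ⋆^{1/2}. -/
noncomputable def distT (L Ls : Tensor I₁ R I₃) (Rt Rs : Tensor I₂ R I₃)
    (Sh : Tensor R R I₃) : ℝ :=
  sInf {d : ℝ | ∃ Q Qi : Tensor R R I₃, TInv Q Qi ∧ d = alignErr L Ls Rt Rs Sh Q Qi}

/-- Q (with inverse Qi) is an optimal alignment tensor: it attains the infimum
defining the distance metric. -/
def IsOptAlign (L Ls : Tensor I₁ R I₃) (Rt Rs : Tensor I₂ R I₃)
    (Sh : Tensor R R I₃) (Q Qi : Tensor R R I₃) : Prop :=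
  TInv Q Qi ∧ alignErr L Ls Rt Rs Sh Q Qi = distT L Ls Rt Rs Sh

/-- Entrywise soft-thresholding. -/
noncomputable def softThresh (ζ : ℝ) (A : Tensor I₁ I₂ I₃) : Tensor I₁ I₂ I₃ :=
  fun i j k => Real.sign (A i j k) * max 0 (|A i j k| - ζ)

/-- Support: the set of index triples at which the tensor is nonzero. -/
def supp (A : Tensor I₁ I₂ I₃) : Set (Fin I₁ × Fin I₂ × Fin I₃) :=
  {p | A p.1 p.2.1 p.2.2 ≠ 0}

/-- α-sparsity: every horizontal, lateral and frontal slice has at most an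
α fraction of nonzero entries. -/
def IsSparse (α : ℝ) (S : Tensor I₁ I₂ I₃) : Prop :=
  (∀ i₁ : Fin I₁, ({p : Fin I₂ × Fin I₃ | S i₁ p.1 p.2 ≠ 0}.ncard : ℝ) ≤ α * I₂ * I₃) ∧
  (∀ i₂ : Fin I₂, ({p : Fin I₁ × Fin I₃ | S p.1 i₂ p.2 ≠ 0}.ncard : ℝ) ≤ α * I₁ * I₃) ∧
  (∀ i₃ : Fin I₃, ({p : Fin I₁ × Fin I₂ | S p.1 p.2 i₃ ≠ 0}.ncard : ℝ) ≤ α * I₁ * I₂)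

/-- Tensor μ-incoherence conditions for the skinny t-SVD factors U, V. -/
def Incoherent (μ : ℝ) (U : Tensor I₁ R I₃) (V : Tensor I₂ R I₃) : Prop :=
  twoInfNorm U ≤ Real.sqrt (μ * R / I₁) ∧ twoInfNorm V ≤ Real.sqrt (μ * R / I₂)

/-- Top-R truncated t-SVD of A: a skinny t-SVD-shaped factorization which, in
every Fourier-domain frontal slice, keeps R largest singular values together
with their singular vectors (the residual is orthogonal to the kept singular
vectors and its spectral norm is at most every kept singular value). -/
structure IsTruncTSVD (A : Tensor I₁ I₂ I₃) (U : Tensor I₁ R I₃)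
    (S : Tensor R R I₃) (V : Tensor I₂ R I₃) : Prop where
  orthU : tprod (tT U) U = idT R I₃
  orthV : tprod (tT V) V = idT R I₃
  diag : FDiagNonneg S
  leftOrth : ∀ k, (fSlice U k)ᴴ * (fSlice A k - fSlice (tprod (tprod U S) (tT V)) k) = 0
  rightOrth : ∀ k, (fSlice A k - fSlice (tprod (tprod U S) (tT V)) k) * fSlice V k = 0
  topR : ∀ k, ∀ r : Fin R,
    matSpecNorm (fSlice A k - fSlice (tprod (tprod U S) (tT V)) k) ≤ (fSlice S k r r).re

end RTPCA

open RTPCA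

section Fourier
open Complex
variable {I₁ I₂ I₃ J R : ℕ}

noncomputable def EE (I₃ : ℕ) (n : ℤ) : ℂ :=
  Complex.exp (2 * Real.pi * Complex.I * n / I₃)

lemma EE_add (a b : ℤ) : EE I₃ (a + b) = EE I₃ a * EE I₃ b := by
  rw [EE, EE, EE, ← Complex.exp_add]
  congr 1
  push_cast
  ring

lemma EE_nat_mul (a : ℤ) (t : ℕ) : EE I₃ (a * t) = EE I₃ a ^ t := by
  rw [EE, EE, ← Complex.exp_nat_mul]
  congr 1
  push_cast
  ring

lemma EE_dvd {n : ℤ} (h : (I₃ : ℤ) ∣ n) : EE I₃ n = 1 := by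
  obtain ⟨c, rfl⟩ := h
  rcases Nat.eq_zero_or_pos I₃ with h0 | h0
  · simp [EE, h0]
  · have hI : (I₃ : ℂ) ≠ 0 := Nat.cast_ne_zero.mpr h0.ne'
    rw [EE]
    have : 2 * (Real.pi:ℂ) * Complex.I * ((I₃:ℤ) * c : ℤ) / I₃ = (c : ℂ) * (2 * Real.pi * Complex.I) := by
      push_cast
      field_simp
    rw [this, Complex.exp_int_mul_two_pi_mul_I]

lemma EE_congr {a b : ℤ} (h : (I₃ : ℤ) ∣ a - b) : EE I₃ a = EE I₃ b := by
  have : a = b + (a - b) := by ring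
  rw [this, EE_add, EE_dvd h, mul_one]

lemma EE_conj (n : ℤ) : (starRingEnd ℂ) (EE I₃ n) = EE I₃ (-n) := by
  rw [EE, EE, ← Complex.exp_conj]
  congr 1
  simp only [map_div₀, _root_.map_mul, map_ofNat, Complex.conj_I, Complex.conj_ofReal,
    map_intCast, map_natCast]
  push_cast
  ring

lemma EE_ne_one {d : ℤ} (hI : 0 < I₃) (hd : ¬ (I₃ : ℤ) ∣ d) : EE I₃ d ≠ 1 := by
  intro hone
  rw [EE, Complex.exp_eq_one_iff] at hone
  obtain ⟨n, hn⟩ := hone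
  have hI' : (I₃ : ℂ) ≠ 0 := Nat.cast_ne_zero.mpr hI.ne'
  have h2 : (2 * (Real.pi:ℂ) * Complex.I) ≠ 0 := by
    simp [Real.pi_ne_zero, Complex.I_ne_zero]
  have : (d : ℂ) = (n : ℂ) * I₃ := by
    field_simp at hn
    have := hn
    -- hn : 2 * π * I * d = n * (2 * π * I) * I₃ (roughly)
    apply mul_left_cancel₀ h2
    linear_combination (2 * (Real.pi:ℂ) * Complex.I) * this
  have hd' : (d : ℤ) = n * I₃ := by exact_mod_cast this
  exact hd ⟨n, by linarith [hd']⟩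

lemma sum_EE (hI : 0 < I₃) (d : ℤ) :
    ∑ t : Fin I₃, EE I₃ (d * t.val) = if (I₃ : ℤ) ∣ d then (I₃ : ℂ) else 0 := by
  have hpow : ∀ t : Fin I₃, EE I₃ (d * t.val) = EE I₃ d ^ (t.val) := fun t => EE_nat_mul d t.val
  split_ifs with hdvd
  · have h1 : ∀ t : Fin I₃, EE I₃ (d * t.val) = 1 := fun t => by
      rw [hpow t, EE_dvd hdvd, one_pow]
    simp [h1]
  · have hne := EE_ne_one hI hdvd
    have h1 : ∑ t : Fin I₃, EE I₃ (d * t.val) = ∑ t ∈ Finset.range I₃, EE I₃ d ^ t := by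
      rw [← Fin.sum_univ_eq_sum_range]
      exact Finset.sum_congr rfl fun t _ => hpow t
    rw [h1, geom_sum_eq hne, ← EE_nat_mul, EE_dvd ⟨d, by ring⟩]
    simp
end Fourier
section Fourier2
open Complex
variable {I₁ I₂ I₃ J R : ℕ}

lemma fin_neg_dvd (m : Fin I₃) : (I₃:ℤ) ∣ (((-m : Fin I₃)).val : ℤ) + (m.val : ℤ) := by
  have h1 : ((-m : Fin I₃)).val = (I₃ - m.val) % I₃ := rfl
  have hm : m.val ≤ I₃ := m.isLt.le
  have h3 : ((I₃ - m.val) % I₃ + m.val) ≡ 0 [MOD I₃] := by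
    calc ((I₃ - m.val) % I₃ + m.val) ≡ (I₃ - m.val) + m.val [MOD I₃] :=
          (Nat.mod_modEq _ _).add_right _
    _ = I₃ := by omega
    _ ≡ 0 [MOD I₃] := Nat.modEq_zero_iff_dvd.mpr dvd_rfl
  have h4 : I₃ ∣ ((-m : Fin I₃)).val + m.val := by
    rw [h1]; exact Nat.modEq_zero_iff_dvd.mp h3
  exact_mod_cast Int.natCast_dvd_natCast.mpr h4

lemma fin_add_val_dvd (s u : Fin I₃) :
    (I₃:ℤ) ∣ ((s.val:ℤ) + u.val) - (((s + u : Fin I₃)).val : ℤ) := by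
  have h1 : ((s + u : Fin I₃)).val = (s.val + u.val) % I₃ := rfl
  have h2 : I₃ ∣ (s.val + u.val) - (s.val + u.val) % I₃ := Nat.dvd_sub_mod _
  have h3 : (s.val + u.val) % I₃ ≤ s.val + u.val := Nat.mod_le _ _
  have h4 := Int.natCast_dvd_natCast.mpr h2
  rw [Nat.cast_sub h3] at h4
  rw [h1]
  exact_mod_cast h4

lemma fin_dvd_iff (m k : Fin I₃) : (I₃:ℤ) ∣ (m.val:ℤ) - (k.val:ℤ) ↔ m = k := by
  constructor
  · intro h
    have habs : |(m.val:ℤ) - (k.val:ℤ)| < (I₃:ℤ) := by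
      rw [abs_lt]; constructor <;> [linarith [k.isLt, Int.ofNat_nonneg m.val];
        linarith [m.isLt, Int.ofNat_nonneg k.val]]
    have := Int.eq_zero_of_abs_lt_dvd h habs
    have : m.val = k.val := by omega
    exact Fin.ext this
  · rintro rfl; simp

lemma dft_eq (A : Tensor I₁ I₂ I₃) (i : Fin I₁) (j : Fin I₂) (k : Fin I₃) :
    dft A i j k = ∑ t : Fin I₃, (A i j t : ℂ) * EE I₃ (-((k.val:ℤ) * t.val)) := by
  unfold dft EE
  refine Finset.sum_congr rfl fun t _ => ?_
  congr 1
  push_cast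
  ring

lemma invDft_eq (F : Fin I₁ → Fin I₂ → Fin I₃ → ℂ) (i : Fin I₁) (j : Fin I₂) (t : Fin I₃) :
    invDft F i j t = ((∑ m : Fin I₃, F i j m * EE I₃ ((m.val:ℤ) * t.val)) / I₃).re := by
  unfold invDft EE
  congr 2
  refine Finset.sum_congr rfl fun m _ => ?_
  congr 2
  push_cast
  ring

lemma dft_conj_neg (A : Tensor I₁ I₂ I₃) (i : Fin I₁) (j : Fin I₂) (k : Fin I₃) :
    dft A i j (-k) = (starRingEnd ℂ) (dft A i j k) := by
  rw [dft_eq, dft_eq, map_sum]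
  refine Finset.sum_congr rfl fun t _ => ?_
  rw [_root_.map_mul, Complex.conj_ofReal, EE_conj, neg_neg]
  congr 1
  refine EE_congr ?_
  have hd := fin_neg_dvd k
  have heq : -(((-k : Fin I₃)).val : ℤ) * t.val - (k.val:ℤ) * t.val
      = (-(t.val:ℤ)) * ((((-k : Fin I₃)).val : ℤ) + k.val) := by ring
  rw [show -(((-k : Fin I₃)).val : ℤ) * (t.val:ℤ) = -((((-k : Fin I₃)).val : ℤ) * t.val) by ring] at heq
  rw [heq]
  exact hd.mul_left _

end Fourier2
section Fourier3
open Complex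
variable {I₁ I₂ I₃ J R : ℕ}

lemma EE_modeq {a b : ℤ} (h : a ≡ b [ZMOD (I₃:ℤ)]) : EE I₃ a = EE I₃ b :=
  EE_congr (Int.ModEq.dvd h.symm)

lemma fin_neg_modeq (m : Fin I₃) : (((-m : Fin I₃)).val : ℤ) ≡ -(m.val : ℤ) [ZMOD (I₃:ℤ)] := by
  rw [Int.modEq_iff_dvd]
  have h2 : -((m.val:ℤ)) - (((-m : Fin I₃)).val:ℤ) = -((((-m : Fin I₃)).val:ℤ) + m.val) := by
    ring
  rw [h2]
  exact dvd_neg.mpr (fin_neg_dvd m)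

lemma fin_add_modeq (s u : Fin I₃) :
    (((s + u : Fin I₃)).val : ℤ) ≡ (s.val : ℤ) + u.val [ZMOD (I₃:ℤ)] := by
  rw [Int.modEq_iff_dvd]
  simpa using fin_add_val_dvd s u

lemma dft_invDft (F : Fin I₁ → Fin I₂ → Fin I₃ → ℂ)
    (hsym : ∀ (i : Fin I₁) (j : Fin I₂) (k : Fin I₃), F i j (-k) = (starRingEnd ℂ) (F i j k))
    (i : Fin I₁) (j : Fin I₂) (k : Fin I₃) :
    dft (invDft F) i j k = F i j k := by
  have hI : 0 < I₃ := k.pos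
  have hIC : (I₃ : ℂ) ≠ 0 := Nat.cast_ne_zero.mpr hI.ne'
  have hreal : ∀ t : Fin I₃,
      ((((∑ m : Fin I₃, F i j m * EE I₃ ((m.val:ℤ) * t.val)) / (I₃:ℂ)).re : ℂ))
        = (∑ m : Fin I₃, F i j m * EE I₃ ((m.val:ℤ) * t.val)) / I₃ := by
    intro t
    rw [← Complex.conj_eq_iff_re]
    simp only [map_div₀, map_sum, _root_.map_mul, EE_conj, map_natCast]
    congr 1
    refine Fintype.sum_equiv (Equiv.neg (Fin I₃)) _ _ fun m => ?_
    simp only [Equiv.neg_apply]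
    rw [← hsym i j m]
    congr 1
    refine EE_modeq ?_
    calc -((m.val:ℤ) * t.val) = (-(m.val:ℤ)) * t.val := by ring
    _ ≡ (((-m : Fin I₃)).val : ℤ) * t.val [ZMOD (I₃:ℤ)] :=
        Int.ModEq.mul (fin_neg_modeq m).symm (Int.ModEq.refl _)
  calc dft (invDft F) i j k
      = ∑ t : Fin I₃, ((∑ m : Fin I₃, F i j m * EE I₃ ((m.val:ℤ) * t.val)) / I₃)
          * EE I₃ (-((k.val:ℤ) * t.val)) := by
        rw [dft_eq]
        refine Finset.sum_congr rfl fun t _ => ?_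
        rw [invDft_eq]
        rw [hreal t]
    _ = ∑ t : Fin I₃, ∑ m : Fin I₃,
          F i j m * EE I₃ (((m.val:ℤ) - k.val) * t.val) / I₃ := by
        refine Finset.sum_congr rfl fun t _ => ?_
        rw [div_mul_eq_mul_div, Finset.sum_mul, Finset.sum_div]
        refine Finset.sum_congr rfl fun m _ => ?_
        rw [mul_assoc, ← EE_add]
        congr 3
        ring
    _ = ∑ m : Fin I₃, ∑ t : Fin I₃,
          F i j m * EE I₃ (((m.val:ℤ) - k.val) * t.val) / I₃ := Finset.sum_comm
    _ = F i j k := by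
        rw [Finset.sum_eq_single k]
        · have : ∀ t : Fin I₃, F i j k * EE I₃ (((k.val:ℤ) - k.val) * t.val) / I₃
              = F i j k / I₃ := by
            intro t
            rw [show ((k.val:ℤ) - k.val) * t.val = 0 by ring, EE_dvd (dvd_zero _), mul_one]
          rw [Finset.sum_congr rfl fun t _ => this t]
          rw [Finset.sum_const, Finset.card_univ, Fintype.card_fin]
          rw [nsmul_eq_mul]
          field_simp
        · intro m _ hmk
          rw [← Finset.sum_div, ← Finset.mul_sum, sum_EE hI]
          rw [if_neg]
          · simp
          · intro hdvd
            exact hmk ((fin_dvd_iff m k).mp hdvd)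
        · intro hk
          exact absurd (Finset.mem_univ k) hk

lemma invDft_dft (A : Tensor I₁ I₂ I₃) (hI : 0 < I₃) :
    invDft (fun i j k => dft A i j k) = A := by
  funext i j t
  have hIC : (I₃ : ℂ) ≠ 0 := Nat.cast_ne_zero.mpr hI.ne'
  rw [invDft_eq]
  have key : ∑ m : Fin I₃, dft A i j m * EE I₃ ((m.val:ℤ) * t.val) = (A i j t : ℂ) * I₃ := by
    calc ∑ m : Fin I₃, dft A i j m * EE I₃ ((m.val:ℤ) * t.val)
        = ∑ m : Fin I₃, ∑ s : Fin I₃,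
            (A i j s : ℂ) * EE I₃ (((t.val:ℤ) - s.val) * m.val) := by
          refine Finset.sum_congr rfl fun m _ => ?_
          rw [dft_eq, Finset.sum_mul]
          refine Finset.sum_congr rfl fun s _ => ?_
          rw [mul_assoc, ← EE_add]
          congr 2
          ring
      _ = ∑ s : Fin I₃, ∑ m : Fin I₃,
            (A i j s : ℂ) * EE I₃ (((t.val:ℤ) - s.val) * m.val) := Finset.sum_comm
      _ = (A i j t : ℂ) * I₃ := by
          rw [Finset.sum_eq_single t]
          · rw [← Finset.mul_sum, sum_EE hI, if_pos (by simp)]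
          · intro s _ hst
            rw [← Finset.mul_sum, sum_EE hI, if_neg, mul_zero]
            intro hdvd
            exact hst ((fin_dvd_iff t s).mp hdvd).symm
          · intro ht
            exact absurd (Finset.mem_univ t) ht
  rw [key]
  rw [mul_div_assoc, div_self hIC, mul_one, Complex.ofReal_re]

lemma tensor_ext_of_fSlice {A B : Tensor I₁ I₂ I₃} (hI : 0 < I₃)
    (h : ∀ k, fSlice A k = fSlice B k) : A = B := by
  have hd : (fun i j k => dft A i j k) = (fun i j k => dft B i j k) := by
    funext i j k
    have := congrFun (congrFun (h k) i) j
    exact this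
  rw [← invDft_dft A hI, ← invDft_dft B hI, hd]

end Fourier3
section Fourier4
open Complex
variable {I₁ I₂ I₃ J R : ℕ}

lemma fSlice_tprod (A : Tensor I₁ I₂ I₃) (B : Tensor I₂ J I₃) (k : Fin I₃) :
    fSlice (tprod A B) k = fSlice A k * fSlice B k := by
  haveI : NeZero I₃ := ⟨k.pos.ne'⟩
  ext i j
  rw [Matrix.mul_apply]
  show dft (tprod A B) i j k = ∑ l, dft A i l k * dft B l j k
  rw [dft_eq]
  unfold RTPCA.tprod
  calc ∑ t : Fin I₃, ((∑ l, ∑ s, A i l s * B l j (t - s) : ℝ) : ℂ)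
          * EE I₃ (-((k.val:ℤ) * t.val))
      = ∑ t : Fin I₃, ∑ l, ∑ s : Fin I₃,
          (A i l s : ℂ) * (B l j (t - s) : ℂ) * EE I₃ (-((k.val:ℤ) * t.val)) := by
        refine Finset.sum_congr rfl fun t _ => ?_
        push_cast
        rw [Finset.sum_mul]
        refine Finset.sum_congr rfl fun l _ => ?_
        rw [Finset.sum_mul]
    _ = ∑ l, ∑ s : Fin I₃, ∑ t : Fin I₃,
          (A i l s : ℂ) * (B l j (t - s) : ℂ) * EE I₃ (-((k.val:ℤ) * t.val)) := by
        rw [Finset.sum_comm]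
        refine Finset.sum_congr rfl fun l _ => Finset.sum_comm
    _ = ∑ l, dft A i l k * dft B l j k := by
        refine Finset.sum_congr rfl fun l _ => ?_
        rw [dft_eq, dft_eq, Finset.sum_mul_sum]
        refine Finset.sum_congr rfl fun s _ => ?_
        have hre : ∀ u : Fin I₃,
            (A i l s : ℂ) * EE I₃ (-((k.val:ℤ) * s.val))
              * ((B l j u : ℂ) * EE I₃ (-((k.val:ℤ) * u.val)))
            = (A i l s : ℂ) * (B l j ((s + u) - s) : ℂ)
              * EE I₃ (-((k.val:ℤ) * ((s + u : Fin I₃)).val)) := by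
          intro u
          rw [add_sub_cancel_left]
          have hEE : EE I₃ (-((k.val:ℤ) * ((s + u : Fin I₃)).val))
              = EE I₃ (-((k.val:ℤ) * s.val)) * EE I₃ (-((k.val:ℤ) * u.val)) := by
            rw [← EE_add]
            refine EE_modeq ?_
            calc -((k.val:ℤ) * ((s + u : Fin I₃)).val)
                ≡ -((k.val:ℤ) * ((s.val:ℤ) + u.val)) [ZMOD (I₃:ℤ)] :=
                  ((Int.ModEq.refl (k.val:ℤ)).mul (fin_add_modeq s u)).neg
              _ = -((k.val:ℤ) * s.val) + -((k.val:ℤ) * u.val) := by ring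
          rw [hEE]
          ring
        rw [← Fintype.sum_equiv (Equiv.addLeft s)
          (fun u => (A i l s : ℂ) * EE I₃ (-((k.val:ℤ) * s.val))
            * ((B l j u : ℂ) * EE I₃ (-((k.val:ℤ) * u.val))))
          (fun t => (A i l s : ℂ) * (B l j (t - s) : ℂ) * EE I₃ (-((k.val:ℤ) * t.val)))
          (fun u => by simpa [Equiv.addLeft] using hre u)]

lemma fSlice_tT (A : Tensor I₁ I₂ I₃) (k : Fin I₃) :
    fSlice (tT A) k = (fSlice A k)ᴴ := by
  ext j i
  show dft (tT A) j i k = (starRingEnd ℂ) (dft A i j k)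
  rw [← dft_conj_neg]
  rw [dft_eq, dft_eq]
  refine Fintype.sum_equiv (Equiv.neg (Fin I₃)) _ _ fun t => ?_
  simp only [Equiv.neg_apply]
  show ((tT A j i t : ℝ) : ℂ) * EE I₃ (-((k.val:ℤ) * t.val))
    = ((A i j (-t) : ℝ) : ℂ) * EE I₃ (-((((-k : Fin I₃)).val:ℤ) * (((-t : Fin I₃)).val:ℤ)))
  unfold RTPCA.tT
  congr 1
  refine EE_modeq ?_
  calc -((k.val:ℤ) * t.val) = (-(k.val:ℤ)) * t.val * (-1) * (-1) := by ring
  _ ≡ (((-k : Fin I₃)).val:ℤ) * (-(t.val:ℤ)) * (-1) [ZMOD (I₃:ℤ)] := by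
      have h1 := (fin_neg_modeq k).symm
      have h2 : ((-(k.val:ℤ)) * t.val * (-1)) = (-(k.val:ℤ)) * (-(t.val:ℤ)) := by ring
      have h3 : ((((-k : Fin I₃)).val:ℤ) * (-(t.val:ℤ))) = (((-k : Fin I₃)).val:ℤ) * (-(t.val:ℤ)) := rfl
      calc (-(k.val:ℤ)) * t.val * (-1) * (-1)
          = (-(k.val:ℤ)) * (-(t.val:ℤ)) * (-1) := by ring
      _ ≡ ((((-k : Fin I₃)).val:ℤ)) * (-(t.val:ℤ)) * (-1) [ZMOD (I₃:ℤ)] :=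
          ((h1.mul (Int.ModEq.refl _)).mul (Int.ModEq.refl _))
  _ ≡ ((((-k : Fin I₃)).val:ℤ)) * (((-t : Fin I₃)).val:ℤ) * (-1) [ZMOD (I₃:ℤ)] :=
      (((Int.ModEq.refl _).mul (fin_neg_modeq t).symm).mul (Int.ModEq.refl _))
  _ = -(((((-k : Fin I₃)).val:ℤ)) * (((-t : Fin I₃)).val:ℤ)) := by ring

lemma fSlice_idT (k : Fin I₃) : fSlice (idT R I₃) k = (1 : Matrix (Fin R) (Fin R) ℂ) := by
  have hI : 0 < I₃ := k.pos
  set z : Fin I₃ := ⟨0, hI⟩ with hz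
  ext i j
  show dft (idT R I₃) i j k = (1 : Matrix (Fin R) (Fin R) ℂ) i j
  rw [dft_eq]
  unfold RTPCA.idT
  by_cases hij : i = j
  · have hterm : ∀ t : Fin I₃,
        (((if i = j ∧ (t.val : ℕ) = 0 then (1:ℝ) else 0) : ℝ) : ℂ)
          * EE I₃ (-((k.val:ℤ) * t.val)) = if t = z then 1 else 0 := by
      intro t
      by_cases ht : t = z
      · subst ht
        simp only [hij, and_true, if_pos]
        have : -((k.val:ℤ) * (z.val:ℤ)) = 0 := by simp [hz]
        rw [this, EE_dvd (dvd_zero _)]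
        simp [hz]
      · have ht' : ¬ (t.val = 0) := fun h0 => ht (Fin.ext (by simp [hz, h0]))
        simp [ht, ht']
    rw [Finset.sum_congr rfl fun t _ => hterm t, Finset.sum_ite_eq' Finset.univ z]
    simp [Matrix.one_apply, hij]
  · have hterm : ∀ t : Fin I₃,
        (((if i = j ∧ (t.val : ℕ) = 0 then (1:ℝ) else 0) : ℝ) : ℂ)
          * EE I₃ (-((k.val:ℤ) * t.val)) = 0 := by
      intro t; simp [hij]
    rw [Finset.sum_congr rfl fun t _ => hterm t]
    simp [Matrix.one_apply, hij]

lemma fSlice_sub (A B : Tensor I₁ I₂ I₃) (k : Fin I₃) :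
    fSlice (A - B) k = fSlice A k - fSlice B k := by
  ext i j
  show dft (A - B) i j k = dft A i j k - dft B i j k
  rw [dft_eq, dft_eq, dft_eq, ← Finset.sum_sub_distrib]
  refine Finset.sum_congr rfl fun t _ => ?_
  have : (A - B) i j t = A i j t - B i j t := rfl
  rw [this]
  push_cast
  ring

end Fourier4
section MatCore
open Matrix

lemma toEL_mul {m n p : ℕ} (A : Matrix (Fin m) (Fin n) ℂ) (B : Matrix (Fin n) (Fin p) ℂ)
    (v : EuclideanSpace ℂ (Fin p)) :
    Matrix.toEuclideanLin (A * B) v = Matrix.toEuclideanLin A (Matrix.toEuclideanLin B v) := by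
  simp [Matrix.toEuclideanLin_apply, Matrix.mulVec_mulVec]

lemma norm_toEL_le {m n : ℕ} (M : Matrix (Fin m) (Fin n) ℂ) (v : EuclideanSpace ℂ (Fin n)) :
    ‖Matrix.toEuclideanLin M v‖ ≤ matSpecNorm M * ‖v‖ :=
  (LinearMap.toContinuousLinearMap (Matrix.toEuclideanLin M)).le_opNorm v

lemma matSpecNorm_le {m n : ℕ} {M : Matrix (Fin m) (Fin n) ℂ} {C : ℝ} (hC : 0 ≤ C)
    (h : ∀ v : EuclideanSpace ℂ (Fin n), ‖Matrix.toEuclideanLin M v‖ ≤ C * ‖v‖) :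
    matSpecNorm M ≤ C :=
  ContinuousLinearMap.opNorm_le_bound _ hC h

lemma matSpecNorm_nonneg {m n : ℕ} (M : Matrix (Fin m) (Fin n) ℂ) : 0 ≤ matSpecNorm M :=
  norm_nonneg _

lemma inner_toEL {m n : ℕ} (B : Matrix (Fin m) (Fin n) ℂ)
    (x : EuclideanSpace ℂ (Fin n)) (y : EuclideanSpace ℂ (Fin n)) :
    (inner ℂ (Matrix.toEuclideanLin B x) (Matrix.toEuclideanLin B y) : ℂ)
      = inner ℂ (x : EuclideanSpace ℂ (Fin n)) (Matrix.toEuclideanLin (Bᴴ * B) y) := by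
  rw [toEL_mul, Matrix.toEuclideanLin_conjTranspose_eq_adjoint, LinearMap.adjoint_inner_right]

theorem core_matrix_lemma {m r : ℕ} (U B : Matrix (Fin m) (Fin r) ℂ)
    (hU : Uᴴ * U = 1) (ε : ℝ) (hεB : matSpecNorm (B - U) ≤ ε) (hε : ε < 1) :
    IsUnit (Bᴴ * B) ∧ matSpecNorm (B * (Bᴴ * B)⁻¹) ≤ 1 / (1 - ε) := by
  have hε0 : (0:ℝ) ≤ ε := le_trans (matSpecNorm_nonneg _) hεB
  have h1ε : (0:ℝ) < 1 - ε := by linarith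
  have hlow : ∀ x : EuclideanSpace ℂ (Fin r), (1 - ε) * ‖x‖ ≤ ‖Matrix.toEuclideanLin B x‖ := by
    intro x
    have hUx : ‖Matrix.toEuclideanLin U x‖ = ‖x‖ := by
      have h2 : (inner ℂ (Matrix.toEuclideanLin U x) (Matrix.toEuclideanLin U x) : ℂ)
          = inner ℂ x x := by
        rw [inner_toEL, hU]
        congr 1
        simp [Matrix.toEuclideanLin_apply]
      rw [inner_self_eq_norm_sq_to_K, inner_self_eq_norm_sq_to_K] at h2
      have h3 : ‖Matrix.toEuclideanLin U x‖ ^ 2 = ‖x‖ ^ 2 := by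
        exact_mod_cast h2
      have := congrArg Real.sqrt h3
      rwa [Real.sqrt_sq (norm_nonneg _), Real.sqrt_sq (norm_nonneg _)] at this
    have hDx : ‖Matrix.toEuclideanLin (B - U) x‖ ≤ ε * ‖x‖ :=
      le_trans (norm_toEL_le _ x) (by nlinarith [norm_nonneg x])
    have hBU : U + (B - U) = B := by abel
    have hsub : Matrix.toEuclideanLin B x
        = Matrix.toEuclideanLin U x + Matrix.toEuclideanLin (B - U) x := by
      rw [← LinearMap.add_apply, ← map_add, hBU]
    have htri : ‖Matrix.toEuclideanLin U x‖
        ≤ ‖Matrix.toEuclideanLin B x‖ + ‖Matrix.toEuclideanLin (B - U) x‖ := by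
      have h4 : Matrix.toEuclideanLin U x
          = Matrix.toEuclideanLin B x - Matrix.toEuclideanLin (B - U) x := by
        rw [hsub]; abel
      rw [h4]; exact norm_sub_le _ _
    linarith
  have hinj : Function.Injective (Matrix.toEuclideanLin (Bᴴ * B)) := by
    rw [injective_iff_map_eq_zero]
    intro x hx
    have h0 : (inner ℂ (Matrix.toEuclideanLin B x) (Matrix.toEuclideanLin B x) : ℂ) = 0 := by
      rw [inner_toEL, hx, inner_zero_right]
    have hBx : Matrix.toEuclideanLin B x = 0 := by rwa [inner_self_eq_zero] at h0
    have h1 := hlow x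
    rw [hBx, norm_zero] at h1
    have : ‖x‖ ≤ 0 := by nlinarith [norm_nonneg x]
    simpa [norm_le_zero_iff] using this
  have hunit : IsUnit (Bᴴ * B) := by
    rw [← Matrix.mulVec_injective_iff_isUnit]
    intro x y hxy
    have : Matrix.toEuclideanLin (Bᴴ * B) ((WithLp.equiv 2 _).symm x)
        = Matrix.toEuclideanLin (Bᴴ * B) ((WithLp.equiv 2 _).symm y) := by
      rw [WithLp.equiv_symm_apply, Matrix.toEuclideanLin_apply_piLp_toLp,
        Matrix.toEuclideanLin_apply_piLp_toLp, hxy]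
    exact (WithLp.equiv 2 _).symm.injective (hinj this)
  refine ⟨hunit, ?_⟩
  apply matSpecNorm_le (by positivity)
  intro y
  set z := Matrix.toEuclideanLin (Bᴴ * B)⁻¹ y with hz
  have happ : Matrix.toEuclideanLin (B * (Bᴴ * B)⁻¹) y = Matrix.toEuclideanLin B z := by
    rw [toEL_mul]
  have hyz : Matrix.toEuclideanLin (Bᴴ * B) z = y := by
    rw [hz, ← toEL_mul, Matrix.mul_nonsing_inv _ ((Matrix.isUnit_iff_isUnit_det _).mp hunit)]
    simp [Matrix.toEuclideanLin_apply]
  have hkey : ‖Matrix.toEuclideanLin B z‖ ^ 2 ≤ ‖y‖ * ‖z‖ := by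
    have h2 : (inner ℂ (Matrix.toEuclideanLin B z) (Matrix.toEuclideanLin B z) : ℂ)
        = inner ℂ z y := by rw [inner_toEL, hyz]
    have h3 : ‖Matrix.toEuclideanLin B z‖ ^ 2
        = (inner ℂ (z : EuclideanSpace ℂ (Fin r)) y : ℂ).re := by
      have := congrArg Complex.re h2
      rw [inner_self_eq_norm_sq_to_K] at this
      simpa [← Complex.ofReal_pow] using this
    calc ‖Matrix.toEuclideanLin B z‖ ^ 2
        = (inner ℂ (z : EuclideanSpace ℂ (Fin r)) y : ℂ).re := h3
    _ ≤ ‖(inner ℂ (z : EuclideanSpace ℂ (Fin r)) y : ℂ)‖ := Complex.re_le_norm _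
    _ ≤ ‖z‖ * ‖y‖ := norm_inner_le_norm _ _
    _ = ‖y‖ * ‖z‖ := mul_comm _ _
  have hzb : (1 - ε) * ‖z‖ ≤ ‖Matrix.toEuclideanLin B z‖ := hlow z
  rw [happ]
  by_cases h0 : ‖Matrix.toEuclideanLin B z‖ = 0
  · rw [h0]; positivity
  · have hpos : 0 < ‖Matrix.toEuclideanLin B z‖ := lt_of_le_of_ne (norm_nonneg _) (Ne.symm h0)
    rw [div_mul_eq_mul_div, le_div_iff₀ h1ε]
    nlinarith [mul_le_mul_of_nonneg_left hzb (norm_nonneg y),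
      mul_le_mul_of_nonneg_right hkey h1ε.le, mul_pos hpos h1ε]

end MatCore

section Glue
open Complex
variable {I₁ I₂ I₃ R : ℕ}

lemma specNorm_nonneg' (A : Tensor I₁ I₂ I₃) (hI : 0 < I₃) : 0 ≤ specNorm A := by
  haveI : Nonempty (Fin I₃) := ⟨⟨0, hI⟩⟩
  have hb : BddAbove (Set.range fun k : Fin I₃ => matSpecNorm (fSlice A k)) :=
    Set.Finite.bddAbove (Set.finite_range _)
  exact le_trans (matSpecNorm_nonneg _) (le_ciSup hb (Classical.arbitrary (Fin I₃)))

lemma matSpecNorm_fSlice_le (A : Tensor I₁ I₂ I₃) (k : Fin I₃) :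
    matSpecNorm (fSlice A k) ≤ specNorm A := by
  have hb : BddAbove (Set.range fun k : Fin I₃ => matSpecNorm (fSlice A k)) :=
    Set.Finite.bddAbove (Set.finite_range _)
  exact le_ciSup hb k

lemma fSlice_sqrtT (Sig : Tensor R R I₃) (k : Fin I₃) (i j : Fin R) :
    fSlice (sqrtT Sig) k i j = ((Real.sqrt ((fSlice Sig k i j).re) : ℝ) : ℂ) := by
  show dft (sqrtT Sig) i j k = _
  unfold RTPCA.sqrtT
  have hsym : ∀ (i' : Fin R) (j' : Fin R) (k' : Fin I₃),
      (fun i j k => ((Real.sqrt ((dft Sig i j k).re) : ℝ) : ℂ)) i' j' (-k')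
        = (starRingEnd ℂ) ((fun i j k => ((Real.sqrt ((dft Sig i j k).re) : ℝ) : ℂ)) i' j' k') := by
    intro i' j' k'
    simp only
    rw [dft_conj_neg, Complex.conj_ofReal, Complex.conj_re]
  rw [dft_invDft _ hsym]
  rfl

lemma fSlice_invSqrtT (Sig : Tensor R R I₃) (k : Fin I₃) (i j : Fin R) :
    fSlice (invSqrtT Sig) k i j = (((Real.sqrt ((fSlice Sig k i j).re))⁻¹ : ℝ) : ℂ) := by
  show dft (invSqrtT Sig) i j k = _
  unfold RTPCA.invSqrtT
  have hsym : ∀ (i' : Fin R) (j' : Fin R) (k' : Fin I₃),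
      (fun i j k => (((Real.sqrt ((dft Sig i j k).re))⁻¹ : ℝ) : ℂ)) i' j' (-k')
        = (starRingEnd ℂ) ((fun i j k => (((Real.sqrt ((dft Sig i j k).re))⁻¹ : ℝ) : ℂ)) i' j' k') := by
    intro i' j' k'
    simp only
    rw [dft_conj_neg, Complex.conj_ofReal, Complex.conj_re]
  rw [dft_invDft _ hsym]
  rfl

/-- One-sided main lemma. -/
lemma one_side {I₁ : ℕ} (Us : Tensor I₁ R I₃) (Sig : Tensor R R I₃)
    (horth : tprod (tT Us) Us = idT R I₃)
    (hdiag : FDiagPos Sig)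
    (Lnat : Tensor I₁ R I₃)
    (hlt : specNorm (tprod (Lnat - tprod Us (sqrtT Sig)) (invSqrtT Sig)) < 1) :
    ∃ Gl : Tensor R R I₃, TInv (tprod (tT Lnat) Lnat) Gl ∧
      specNorm (tprod (tprod Lnat Gl) (sqrtT Sig))
        ≤ 1 / (1 - specNorm (tprod (Lnat - tprod Us (sqrtT Sig)) (invSqrtT Sig))) := by
  rcases Nat.eq_zero_or_pos I₃ with h0 | hI
  · subst h0
    haveI : IsEmpty (Fin 0) := Fin.isEmpty
    have hzero : ∀ (A : Tensor I₁ R 0), specNorm A = 0 := fun A =>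
      Real.iSup_of_isEmpty _
    have hzero' : ∀ (A B : Tensor R R 0), A = B := by
      intro A B
      funext i j k
      exact k.elim0
    refine ⟨0, ⟨hzero' _ _, hzero' _ _⟩, ?_⟩
    rw [hzero, hzero]
    norm_num
  · haveI : NeZero I₃ := ⟨hI.ne'⟩
    haveI : Nonempty (Fin I₃) := ⟨⟨0, hI⟩⟩
    set D := tprod (Lnat - tprod Us (sqrtT Sig)) (invSqrtT Sig) with hD
    set ε := specNorm D with hε
    have hε0 : 0 ≤ ε := specNorm_nonneg' _ hI
    have h1ε : 0 < 1 - ε := by linarith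
    set G := tprod (tT Lnat) Lnat with hG
    -- per-slice diagonal facts
    have hPQ : ∀ k : Fin I₃,
        fSlice (sqrtT Sig) k * fSlice (invSqrtT Sig) k = 1 := by
      intro k
      ext i j
      rw [Matrix.mul_apply, Finset.sum_eq_single i]
      · rw [fSlice_sqrtT, fSlice_invSqrtT]
        by_cases hij : j = i
        · subst hij
          have hpos := (hdiag.2 k j).1
          have hs : Real.sqrt ((fSlice Sig k j j).re) ≠ 0 :=
            (Real.sqrt_pos.mpr hpos).ne'
          rw [← Complex.ofReal_mul, mul_inv_cancel₀ hs]
          simp [Matrix.one_apply]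
        · have h1 : fSlice Sig k i j = 0 := hdiag.1 k i j (fun hh => hij hh.symm)
          rw [h1]
          simp [Matrix.one_apply, Ne.symm hij, hij]
      · intro l _ hli
        have h1 : fSlice Sig k i l = 0 := hdiag.1 k i l (fun hh => hli hh.symm)
        rw [fSlice_sqrtT, h1]
        simp
      · intro hi
        exact absurd (Finset.mem_univ i) hi
    have hQP : ∀ k : Fin I₃,
        fSlice (invSqrtT Sig) k * fSlice (sqrtT Sig) k = 1 := by
      intro k
      ext i j
      rw [Matrix.mul_apply, Finset.sum_eq_single i]
      · rw [fSlice_sqrtT, fSlice_invSqrtT]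
        by_cases hij : j = i
        · subst hij
          have hpos := (hdiag.2 k j).1
          have hs : Real.sqrt ((fSlice Sig k j j).re) ≠ 0 :=
            (Real.sqrt_pos.mpr hpos).ne'
          rw [← Complex.ofReal_mul, inv_mul_cancel₀ hs]
          simp [Matrix.one_apply]
        · have h1 : fSlice Sig k i j = 0 := hdiag.1 k i j (fun hh => hij hh.symm)
          rw [h1]
          simp [Matrix.one_apply, Ne.symm hij, hij]
      · intro l _ hli
        have h1 : fSlice Sig k i l = 0 := hdiag.1 k i l (fun hh => hli hh.symm)
        rw [fSlice_invSqrtT, h1]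
        simp
      · intro hi
        exact absurd (Finset.mem_univ i) hi
    have hPH : ∀ k : Fin I₃, (fSlice (sqrtT Sig) k)ᴴ = fSlice (sqrtT Sig) k := by
      intro k
      ext i j
      simp only [Matrix.conjTranspose_apply, fSlice_sqrtT, Complex.star_def,
        Complex.conj_ofReal]
      by_cases hij : i = j
      · subst hij; rfl
      · have h1 : fSlice Sig k j i = 0 := hdiag.1 k j i (fun hh => hij hh.symm)
        have h2 : fSlice Sig k i j = 0 := hdiag.1 k i j hij
        rw [h1, h2]
    -- orthogonality per slice
    have hUorth : ∀ k : Fin I₃, (fSlice Us k)ᴴ * fSlice Us k = 1 := by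
      intro k
      have := congrArg (fun T => fSlice T k) horth
      simpa [fSlice_tprod, fSlice_tT, fSlice_idT] using this
    -- slice of D
    have hDslice : ∀ k : Fin I₃,
        fSlice D k = (fSlice Lnat k - fSlice Us k * fSlice (sqrtT Sig) k)
          * fSlice (invSqrtT Sig) k := by
      intro k
      rw [hD, fSlice_tprod, fSlice_sub, fSlice_tprod]
    -- main slice facts
    have key : ∀ k : Fin I₃,
        IsUnit (fSlice G k) ∧
        matSpecNorm (fSlice Lnat k * (fSlice G k)⁻¹ * fSlice (sqrtT Sig) k)
          ≤ 1 / (1 - ε) := by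
      intro k
      set P := fSlice (sqrtT Sig) k
      set Q := fSlice (invSqrtT Sig) k
      set Uh := fSlice Us k
      set M := fSlice Lnat k
      set B := Uh + fSlice D k with hB
      have hBU : B - Uh = fSlice D k := by rw [hB]; abel
      have hM : M = B * P := by
        rw [hB, Matrix.add_mul, hDslice k, Matrix.mul_assoc, hQP k, Matrix.mul_one]
        abel
      have hεk : matSpecNorm (B - Uh) ≤ ε := by
        rw [hBU, hε]
        exact matSpecNorm_fSlice_le D k
      obtain ⟨hunitBB, hbound⟩ := core_matrix_lemma Uh B (hUorth k) ε hεk hlt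
      have hPunit : IsUnit P := ⟨⟨P, Q, hPQ k, hQP k⟩, rfl⟩
      have hGsl : fSlice G k = P * (Bᴴ * B) * P := by
        rw [hG, fSlice_tprod, fSlice_tT]
        show Mᴴ * M = P * (Bᴴ * B) * P
        rw [hM, Matrix.conjTranspose_mul, hPH k]
        simp only [Matrix.mul_assoc]
        rfl
      have hGunit : IsUnit (fSlice G k) := by
        rw [hGsl]
        exact (hPunit.mul hunitBB).mul hPunit
      refine ⟨hGunit, ?_⟩
      have hPinv : P⁻¹ = Q := Matrix.inv_eq_right_inv (hPQ k)
      have hGinv : (fSlice G k)⁻¹ = Q * ((Bᴴ * B)⁻¹ * Q) := by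
        rw [hGsl, Matrix.mul_inv_rev, Matrix.mul_inv_rev, hPinv]
      have hfinal : M * (fSlice G k)⁻¹ * P = B * (Bᴴ * B)⁻¹ := by
        rw [hGinv, hM]
        calc B * P * (Q * ((Bᴴ * B)⁻¹ * Q)) * P
            = B * ((P * Q) * ((Bᴴ * B)⁻¹ * (Q * P))) := by
              simp only [Matrix.mul_assoc]
          _ = B * (Bᴴ * B)⁻¹ := by
              rw [hPQ k, hQP k, Matrix.one_mul, Matrix.mul_one]
      rw [hfinal]
      exact hbound
    -- define the inverse tensor
    set Gl : Tensor R R I₃ :=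
      invDft (fun i j k => ((fSlice G k)⁻¹ : Matrix (Fin R) (Fin R) ℂ) i j) with hGl
    have hGlslice : ∀ k : Fin I₃, fSlice Gl k = (fSlice G k)⁻¹ := by
      intro k
      ext i j
      show dft Gl i j k = _
      have hsym : ∀ (i' : Fin R) (j' : Fin R) (k' : Fin I₃),
          (fun i j k => ((fSlice G k)⁻¹ : Matrix (Fin R) (Fin R) ℂ) i j) i' j' (-k')
            = (starRingEnd ℂ)
              ((fun i j k => ((fSlice G k)⁻¹ : Matrix (Fin R) (Fin R) ℂ) i j) i' j' k') := by
        intro i' j' k'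
        simp only
        have hmap : fSlice G (-k') = (fSlice G k').map (starRingEnd ℂ) := by
          ext a b
          rw [Matrix.map_apply]
          exact dft_conj_neg G a b k'
        have hinvmap : (fSlice G (-k'))⁻¹ = ((fSlice G k')⁻¹).map (starRingEnd ℂ) := by
          rw [hmap]
          apply Matrix.inv_eq_right_inv
          rw [← Matrix.map_mul,
            Matrix.mul_nonsing_inv _ ((Matrix.isUnit_iff_isUnit_det _).mp (key k').1),
            Matrix.map_one _ (map_zero _) (map_one _)]
        rw [hinvmap, Matrix.map_apply]
      rw [hGl, dft_invDft _ hsym]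
    have hunitdet : ∀ k : Fin I₃, IsUnit (fSlice G k).det := fun k =>
      (Matrix.isUnit_iff_isUnit_det _).mp (key k).1
    refine ⟨Gl, ⟨?_, ?_⟩, ?_⟩
    · apply tensor_ext_of_fSlice hI
      intro k
      rw [fSlice_tprod, hGlslice k, Matrix.mul_nonsing_inv _ (hunitdet k), fSlice_idT]
    · apply tensor_ext_of_fSlice hI
      intro k
      rw [fSlice_tprod, hGlslice k, Matrix.nonsing_inv_mul _ (hunitdet k), fSlice_idT]
    · show (⨆ k : Fin I₃,
          matSpecNorm (fSlice (tprod (tprod Lnat Gl) (sqrtT Sig)) k)) ≤ 1 / (1 - ε)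
      apply ciSup_le
      intro k
      rw [fSlice_tprod, fSlice_tprod, hGlslice k]
      exact (key k).2

end Glue




/-- Weyl-type lemma: invertibility of the Gram tensors and
operator-norm bounds. -/
theorem gram_invertible_and_opNorm_bound
    {I₁ I₂ I₃ R : ℕ}
    (Xs : Tensor I₁ I₂ I₃) (Us : Tensor I₁ R I₃) (Sig : Tensor R R I₃) (Vs : Tensor I₂ R I₃)
    (hsvd : IsSkinnyTSVD Xs Us Sig Vs)
    (Lnat : Tensor I₁ R I₃) (Rnat : Tensor I₂ R I₃)
    (h : max (specNorm (tprod (Lnat - tprod Us (sqrtT Sig)) (invSqrtT Sig)))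
             (specNorm (tprod (Rnat - tprod Vs (sqrtT Sig)) (invSqrtT Sig))) < 1) :
    (∃ Gl : Tensor R R I₃, TInv (tprod (tT Lnat) Lnat) Gl ∧
      specNorm (tprod (tprod Lnat Gl) (sqrtT Sig))
        ≤ 1 / (1 - specNorm (tprod (Lnat - tprod Us (sqrtT Sig)) (invSqrtT Sig)))) ∧
    (∃ Gr : Tensor R R I₃, TInv (tprod (tT Rnat) Rnat) Gr ∧
      specNorm (tprod (tprod Rnat Gr) (sqrtT Sig))
        ≤ 1 / (1 - specNorm (tprod (Rnat - tprod Vs (sqrtT Sig)) (invSqrtT Sig)))) := by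
  have hL : specNorm (tprod (Lnat - tprod Us (sqrtT Sig)) (invSqrtT Sig)) < 1 :=
    lt_of_le_of_lt (le_max_left _ _) h
  have hR : specNorm (tprod (Rnat - tprod Vs (sqrtT Sig)) (invSqrtT Sig)) < 1 :=
    lt_of_le_of_lt (le_max_right _ _) h
  exact ⟨one_side Us Sig hsvd.orthU hsvd.diag Lnat hL,
    one_side Vs Sig hsvd.orthV hsvd.diag Rnat hR⟩
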